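/- arXiv:1711.00498 — 2 statements merged into one kernel-verified Lean document; each statement's English description precedes it below -/
import Mathlib

section
/- Hardy-type control of u by the conformal energy: if u is sufficiently regular on K_{[s_0,s_1]} and vanishes near the conical boundary, then ‖(s/r)u‖_{L^2(H_s)} ≤ 2 E_c(s,u)^{1/2}, where r = |x|. -/
open MeasureTheory

noncomputable section

/-- Partial derivative in direction `i` on `ℝ^{1+3}` (index 0 = time). -/
def pd (i : Fin 4) (f : (Fin 4 → ℝ) → ℝ) (p : Fin 4 → ℝ) : ℝ :=
  fderiv ℝ f p (Pi.single i 1)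

/-- Hyperbolic time `s = √(t² − |x|²)`. -/
def sfun (p : Fin 4 → ℝ) : ℝ :=
  Real.sqrt ((p 0) ^ 2 - (p 1) ^ 2 - (p 2) ^ 2 - (p 3) ^ 2)

/-- Spatial radius `r = |x|`. -/
def rfun (p : Fin 4 → ℝ) : ℝ :=
  Real.sqrt ((p 1) ^ 2 + (p 2) ^ 2 + (p 3) ^ 2)

/-- Lorentz boost `L_a = x^a ∂_t + t ∂_a`. -/
def Lop (a : Fin 3) (u : (Fin 4 → ℝ) → ℝ) (p : Fin 4 → ℝ) : ℝ :=
  p a.succ * pd 0 u p + p 0 * pd a.succ u p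

/-- Semi-hyperboloidal time derivative `∂̄_s = (s/t)∂_t`. -/
def pbs (u : (Fin 4 → ℝ) → ℝ) (p : Fin 4 → ℝ) : ℝ :=
  (sfun p / p 0) * pd 0 u p

/-- Semi-hyperboloidal spatial derivative `∂̄_a = (x^a/t)∂_t + ∂_a`. -/
def pba (a : Fin 3) (u : (Fin 4 → ℝ) → ℝ) (p : Fin 4 → ℝ) : ℝ :=
  (p a.succ / p 0) * pd 0 u p + pd a.succ u p

/-- The flat wave operator `□ = ∂_t² − Σ_a ∂_a²`. -/
def Box (u : (Fin 4 → ℝ) → ℝ) (p : Fin 4 → ℝ) : ℝ :=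
  pd 0 (pd 0 u) p - ∑ a : Fin 3, pd a.succ (pd a.succ u) p

/-- The multiplier `K u = s ∂̄_s u + 2 x^a ∂̄_a u`. -/
def Kop (u : (Fin 4 → ℝ) → ℝ) (p : Fin 4 → ℝ) : ℝ :=
  sfun p * pbs u p + ∑ a : Fin 3, 2 * p a.succ * pba a u p

/-- Parametrization of the hyperboloid `H_s`: `x ↦ (√(s²+|x|²), x)`. -/
def hyp (s : ℝ) (x : Fin 3 → ℝ) : Fin 4 → ℝ :=
  Fin.cons (Real.sqrt (s ^ 2 + ∑ a, (x a) ^ 2)) x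

/-- The flat conformal energy on the hyperboloid `H_s`. -/
def Ec (s : ℝ) (u : (Fin 4 → ℝ) → ℝ) : ℝ :=
  ∫ x : Fin 3 → ℝ,
    ((∑ a : Fin 3, (s * pba a u (hyp s x)) ^ 2)
      + (Kop u (hyp s x) + 2 * u (hyp s x)) ^ 2)

open Set Metric ENNReal

abbrev Pi3 := Fin 3 → ℝ


lemma hardy1d {g g' : ℝ → ℝ} {R : ℝ} (hR : 0 < R)
    (hg : ∀ x, HasDerivAt g (g' x) x) (hg' : Continuous g') (hgR : g R = 0) :
    ∫ x in (0:ℝ)..R, (g x) ^ 2 ≤ 4 * ∫ x in (0:ℝ)..R, x ^ 2 * (g' x) ^ 2 := by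
  have hgc : Continuous g := by
    apply continuous_iff_continuousAt.2 fun x => (hg x).continuousAt
  have hu : ∀ x ∈ Set.uIcc (0:ℝ) R, HasDerivAt (fun y => (g y)^2) (2 * g x * g' x) x := by
    intro x _
    have h := (hg x).pow 2
    simp at h
    exact h
  have hv : ∀ x ∈ Set.uIcc (0:ℝ) R, HasDerivAt (fun y : ℝ => y) ((fun _ : ℝ => (1:ℝ)) x) x := by
    intro x _; exact hasDerivAt_id' x
  have hi1 : IntervalIntegrable (fun y => 2 * g y * g' y) volume 0 R :=
    Continuous.intervalIntegrable (by fun_prop) _ _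
  have hi2 : IntervalIntegrable (fun _ : ℝ => (1:ℝ)) volume 0 R :=
    Continuous.intervalIntegrable (by fun_prop) _ _
  have hibp := intervalIntegral.integral_mul_deriv_eq_deriv_mul hu hv hi1 hi2
  have h1 : ∫ x in (0:ℝ)..R, (g x) ^ 2 = ∫ x in (0:ℝ)..R, (-(2 * g x * g' x * x)) := by
    rw [intervalIntegral.integral_neg]
    rw [show (fun x => (g x)^2 * 1) = fun x => (g x)^2 from funext fun x => by ring] at hibp
    rw [hibp, hgR]
    ring
  have hi3 : IntervalIntegrable (fun x => -(2 * g x * g' x * x)) volume 0 R :=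
    Continuous.intervalIntegrable (by fun_prop) _ _
  have hi4 : IntervalIntegrable (fun x => (g x)^2 / 2 + 2 * (x^2 * (g' x)^2)) volume 0 R :=
    Continuous.intervalIntegrable (by fun_prop) _ _
  have h2 : ∫ x in (0:ℝ)..R, (-(2 * g x * g' x * x))
      ≤ ∫ x in (0:ℝ)..R, ((g x)^2 / 2 + 2 * (x^2 * (g' x)^2)) := by
    apply intervalIntegral.integral_mono_on hR.le hi3 hi4
    intro x _
    nlinarith [sq_nonneg (g x + 2 * x * g' x)]
  have hi5 : IntervalIntegrable (fun x => (g x)^2 / 2) volume 0 R :=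
    Continuous.intervalIntegrable (by fun_prop) _ _
  have hi6 : IntervalIntegrable (fun x : ℝ => 2 * (x^2 * (g' x)^2)) volume 0 R :=
    Continuous.intervalIntegrable (by fun_prop) _ _
  have h3 : ∫ x in (0:ℝ)..R, ((g x)^2 / 2 + 2 * (x^2 * (g' x)^2))
      = (∫ x in (0:ℝ)..R, (g x)^2) / 2 + 2 * ∫ x in (0:ℝ)..R, x^2 * (g' x)^2 := by
    rw [intervalIntegral.integral_add hi5 hi6, intervalIntegral.integral_div,
      intervalIntegral.integral_const_mul]
  rw [h3] at h2
  rw [h1]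
  linarith [h2]


lemma integrableOn_Ioi_of_cpt {h : ℝ → ℝ} {R : ℝ} (hR : 0 < R) (hc : Continuous h)
    (h0 : ∀ ρ, R < ρ → h ρ = 0) : IntegrableOn h (Ioi (0:ℝ)) := by
  have h1 : IntegrableOn h (Ioc 0 R) := hc.integrableOn_Ioc
  have h2 : IntegrableOn h (Ioi R) := by
    have : EqOn h (fun _ => (0:ℝ)) (Ioi R) := fun x hx => h0 x hx
    rw [integrableOn_congr_fun this measurableSet_Ioi]
    exact integrableOn_zero
  have h3 := h1.union h2
  rwa [Ioc_union_Ioi_eq_Ioi hR.le] at h3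

lemma setIntegral_Ioi_of_cpt {h : ℝ → ℝ} {R : ℝ} (hR : 0 < R) (hc : Continuous h)
    (h0 : ∀ ρ, R < ρ → h ρ = 0) :
    ∫ ρ in Ioi (0:ℝ), h ρ = ∫ ρ in (0:ℝ)..R, h ρ := by
  have h1 : IntegrableOn h (Ioc 0 R) := hc.integrableOn_Ioc
  have h2 : IntegrableOn h (Ioi R) := by
    have : EqOn h (fun _ => (0:ℝ)) (Ioi R) := fun x hx => h0 x hx
    rw [integrableOn_congr_fun this measurableSet_Ioi]
    exact integrableOn_zero
  have z : ∫ ρ in Ioi R, h ρ = 0 :=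
    setIntegral_eq_zero_of_forall_eq_zero fun x hx => h0 x hx
  rw [intervalIntegral.integral_of_le hR.le, ← Ioc_union_Ioi_eq_Ioi hR.le,
    setIntegral_union (Ioc_disjoint_Ioi le_rfl) measurableSet_Ioi h1 h2, z, add_zero]

lemma hardy1d_Ioi {g g' : ℝ → ℝ} {R : ℝ} (hR : 0 < R)
    (hg : ∀ x, HasDerivAt g (g' x) x) (hg' : Continuous g')
    (hgR : ∀ ρ, R ≤ ρ → g ρ = 0) :
    ∫ ρ in Ioi (0:ℝ), (g ρ) ^ 2 ≤ 4 * ∫ ρ in Ioi (0:ℝ), ρ ^ 2 * (g' ρ) ^ 2 := by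
  have hgc : Continuous g := by
    apply continuous_iff_continuousAt.2 fun x => (hg x).continuousAt
  have hg'R : ∀ ρ, R < ρ → g' ρ = 0 := by
    intro ρ hρ
    have hev : g =ᶠ[nhds ρ] (fun _ => 0) := by
      filter_upwards [eventually_gt_nhds hρ] with y hy
      exact hgR y hy.le
    have h2 : deriv g ρ = deriv (fun _ : ℝ => (0:ℝ)) ρ := hev.deriv_eq
    rw [deriv_const] at h2
    rw [← (hg ρ).deriv]
    exact h2
  have e1 : ∫ ρ in Ioi (0:ℝ), (g ρ) ^ 2 = ∫ ρ in (0:ℝ)..R, (g ρ) ^ 2 :=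
    setIntegral_Ioi_of_cpt hR (by fun_prop) (fun ρ hρ => by rw [hgR ρ hρ.le]; ring)
  have e2 : ∫ ρ in Ioi (0:ℝ), ρ ^ 2 * (g' ρ) ^ 2 = ∫ ρ in (0:ℝ)..R, ρ ^ 2 * (g' ρ) ^ 2 :=
    setIntegral_Ioi_of_cpt hR (by fun_prop) (fun ρ hρ => by rw [hg'R ρ hρ]; ring)
  rw [e1, e2]
  exact hardy1d hR hg hg' (hgR R le_rfl)


lemma polar3 (f : Pi3 → ℝ≥0∞) (hf : Measurable f) :
    ∫⁻ x : Pi3, f x = ∫⁻ θ : sphere (0:Pi3) 1, ∫⁻ ρ in Ioi (0:ℝ),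
      ENNReal.ofReal (ρ ^ 2) * f (ρ • (θ : Pi3)) ∂volume ∂((volume : Measure Pi3).toSphere) := by
  have hdim : Module.finrank ℝ Pi3 - 1 = 2 := by
    rw [Module.finrank_fin_fun]
  have mp := Measure.measurePreserving_homeomorphUnitSphereProd (volume : Measure Pi3)
  have hgm : Measurable fun p : sphere (0:Pi3) 1 × Ioi (0:ℝ) => f ((p.2 : ℝ) • (p.1 : Pi3)) := by
    apply hf.comp
    exact ((continuous_subtype_val.comp continuous_snd).smul
      (continuous_subtype_val.comp continuous_fst)).measurable
  have s1 : ∫⁻ x : ({0}ᶜ : Set Pi3), f x.1 ∂(Measure.comap Subtype.val volume)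
      = ∫⁻ x : Pi3, f x := by
    have h := setLIntegral_subtype (μ := (volume : Measure Pi3))
      (MeasurableSet.compl (measurableSet_singleton (0:Pi3))) univ f
    rw [image_univ, Subtype.range_coe, restrict_compl_singleton] at h
    simpa using h
  have s2 : ∫⁻ x : ({0}ᶜ : Set Pi3), f x.1 ∂(Measure.comap Subtype.val volume)
      = ∫⁻ p : sphere (0:Pi3) 1 × Ioi (0:ℝ), f ((p.2 : ℝ) • (p.1 : Pi3))
          ∂((volume : Measure Pi3).toSphere.prod
            (Measure.volumeIoiPow (Module.finrank ℝ Pi3 - 1))) := by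
    rw [← mp.lintegral_comp hgm]
    apply lintegral_congr
    intro x
    congr 1
    rw [← homeomorphUnitSphereProd_symm_apply_coe, Homeomorph.symm_apply_apply]
  have s4 : ∀ θ : sphere (0:Pi3) 1,
      ∫⁻ ρ : Ioi (0:ℝ), f ((ρ : ℝ) • (θ : Pi3)) ∂(Measure.volumeIoiPow 2)
      = ∫⁻ ρ in Ioi (0:ℝ), ENNReal.ofReal (ρ ^ 2) * f (ρ • (θ : Pi3)) := by
    intro θ
    have hd : Measurable fun r : Ioi (0:ℝ) => ENNReal.ofReal ((r : ℝ) ^ 2) :=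
      ENNReal.measurable_ofReal.comp ((measurable_subtype_coe.pow_const 2))
    have hg2 : Measurable fun ρ : Ioi (0:ℝ) => f ((ρ : ℝ) • (θ : Pi3)) :=
      hf.comp (continuous_subtype_val.smul continuous_const).measurable
    rw [Measure.volumeIoiPow, lintegral_withDensity_eq_lintegral_mul _ hd hg2]
    have h := setLIntegral_subtype (μ := (volume : Measure ℝ)) (s := Ioi (0:ℝ)) measurableSet_Ioi univ
      (fun ρ : ℝ => ENNReal.ofReal (ρ ^ 2) * f (ρ • (θ : Pi3)))
    simp at h
    exact h
  rw [← s1, s2, hdim, lintegral_prod _ hgm.aemeasurable]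
  exact lintegral_congr fun θ => s4 θ

lemma norm_le_sqrt : ∀ x : Pi3, ‖x‖ ≤ Real.sqrt (∑ a, x a ^ 2) := by
  intro x
  apply (pi_norm_le_iff_of_nonneg (Real.sqrt_nonneg _)).2
  intro a
  rw [Real.norm_eq_abs, ← Real.sqrt_sq_eq_abs]
  exact Real.sqrt_le_sqrt (Finset.single_le_sum (f := fun i => x i ^ 2)
    (fun i _ => sq_nonneg _) (Finset.mem_univ a))

lemma hardy3 {w : Pi3 → ℝ} (hw : ContDiff ℝ 1 w) {R : ℝ} (hR : 0 < R)
    (h0 : ∀ x : Pi3, R ≤ Real.sqrt (∑ a, x a ^ 2) → w x = 0) :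
    ∫ x : Pi3, (w x / Real.sqrt (∑ a, x a ^ 2)) ^ 2
      ≤ 4 * ∫ x : Pi3, ∑ a : Fin 3, (fderiv ℝ w x (Pi.single a 1)) ^ 2 := by
  set G : Pi3 → ℝ := fun x => ∑ a : Fin 3, (fderiv ℝ w x (Pi.single a 1)) ^ 2 with hG
  set F : Pi3 → ℝ := fun x => (w x / Real.sqrt (∑ a, x a ^ 2)) ^ 2 with hF
  have norm_le : ∀ x : Pi3, ‖x‖ ≤ Real.sqrt (∑ a, x a ^ 2) := by
    intro x
    apply (pi_norm_le_iff_of_nonneg (Real.sqrt_nonneg _)).2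
    intro a
    rw [Real.norm_eq_abs, ← Real.sqrt_sq_eq_abs]
    exact Real.sqrt_le_sqrt (Finset.single_le_sum (f := fun i => x i ^ 2)
      (fun i _ => sq_nonneg _) (Finset.mem_univ a))
  have hwnorm : ∀ x : Pi3, R ≤ ‖x‖ → w x = 0 := fun x hx => h0 x (hx.trans (norm_le x))
  have hfd : Differentiable ℝ w := hw.differentiable one_ne_zero
  have hfc : Continuous (fderiv ℝ w) := hw.continuous_fderiv one_ne_zero
  have hker : ∀ x : Pi3, R < ‖x‖ → fderiv ℝ w x = 0 := by
    intro x hx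
    have hev : w =ᶠ[nhds x] fun _ => 0 := by
      have hop : IsOpen {y : Pi3 | R < ‖y‖} := isOpen_lt continuous_const continuous_norm
      filter_upwards [hop.mem_nhds hx] with y hy
      exact hwnorm y hy.le
    rw [hev.fderiv_eq]
    exact fderiv_const_apply 0
  have Gcont : Continuous G := by
    apply continuous_finset_sum
    intro a _
    exact (hfc.clm_apply continuous_const).pow 2
  have Gnn : ∀ x, 0 ≤ G x := fun x => Finset.sum_nonneg fun a _ => sq_nonneg _
  have Gsupp : HasCompactSupport G := by
    apply HasCompactSupport.intro (isCompact_closedBall (0:Pi3) R)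
    intro x hx
    rw [mem_closedBall, dist_zero_right, not_le] at hx
    simp [hG, hker x hx]
  have intG : Integrable G := Gcont.integrable_of_hasCompactSupport Gsupp
  have int4G : Integrable (fun x => 4 * G x) := intG.const_mul 4
  have sqrt_meas : Measurable fun x : Pi3 => Real.sqrt (∑ a, x a ^ 2) := by fun_prop
  have Fmeas : Measurable F := (hw.continuous.measurable.div sqrt_meas).pow_const 2
  -- per-θ inequality
  have perθ : ∀ θ : sphere (0:Pi3) 1,
      ∫⁻ ρ in Ioi (0:ℝ), ENNReal.ofReal (ρ ^ 2) * ENNReal.ofReal (F (ρ • (θ:Pi3)))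
      ≤ ∫⁻ ρ in Ioi (0:ℝ), ENNReal.ofReal (ρ ^ 2) * ENNReal.ofReal (4 * G (ρ • (θ:Pi3))) := by
    intro θ
    set v : Pi3 := (θ : Pi3) with hvdef
    have hv : ‖v‖ = 1 := mem_sphere_zero_iff_norm.mp θ.2
    have hvne : v ≠ 0 := by
      intro h; rw [h] at hv; simp at hv
    have hsnn : 0 ≤ ∑ a, v a ^ 2 := Finset.sum_nonneg fun a _ => sq_nonneg _
    have hspos : 0 < ∑ a, v a ^ 2 := by
      rcases hsnn.lt_or_eq with h | h
      · exact h
      · exfalso; apply hvne; funext a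
        have := (Finset.sum_eq_zero_iff_of_nonneg (fun i _ => sq_nonneg (v i))).1 h.symm a
          (Finset.mem_univ a)
        exact (pow_eq_zero_iff two_ne_zero).1 this
    set c : ℝ := Real.sqrt (∑ a, v a ^ 2) with hcdef
    have hc : 0 < c := Real.sqrt_pos.2 hspos
    have hc2 : c ^ 2 = ∑ a, v a ^ 2 := Real.sq_sqrt hsnn
    set g : ℝ → ℝ := fun ρ => w (ρ • v) with hgdef
    set g' : ℝ → ℝ := fun ρ => ∑ a : Fin 3, v a * fderiv ℝ w (ρ • v) (Pi.single a 1) with hg'def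
    have hv_decomp : v = ∑ a : Fin 3, v a • (Pi.single a 1 : Pi3) := by
      funext i
      rw [Finset.sum_apply]
      simp [Pi.single_apply, Finset.sum_ite_eq', mul_comm]
    have hlin : ∀ L : Pi3 →L[ℝ] ℝ, L v = ∑ a : Fin 3, v a * L (Pi.single a 1) := by
      intro L
      conv_lhs => rw [hv_decomp]
      rw [_root_.map_sum]
      refine Finset.sum_congr rfl fun a _ => ?_
      rw [L.map_smul, smul_eq_mul]
    have hg : ∀ ρ, HasDerivAt g (g' ρ) ρ := by
      intro ρ
      have hline : HasDerivAt (fun ρ : ℝ => ρ • v) v ρ := by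
        simpa using (hasDerivAt_id ρ).smul_const v
      have hcomp := (hfd (ρ • v)).hasFDerivAt.comp_hasDerivAt ρ hline
      exact hcomp.congr_deriv (hlin _)
    have hgR : ∀ ρ, R ≤ ρ → g ρ = 0 := by
      intro ρ hρ
      apply hwnorm
      rw [norm_smul, hv, mul_one, Real.norm_eq_abs, abs_of_nonneg (le_trans hR.le hρ)]
      exact hρ
    have hg'c : Continuous g' := by
      apply continuous_finset_sum
      intro a _
      exact continuous_const.mul
        ((hfc.comp (continuous_id.smul continuous_const)).clm_apply continuous_const)
    have hg'R : ∀ ρ, R < ρ → g' ρ = 0 := by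
      intro ρ hρ
      have hn : R < ‖ρ • v‖ := by
        rw [norm_smul, hv, mul_one, Real.norm_eq_abs, abs_of_nonneg (hR.le.trans hρ.le)]
        exact hρ
      simp [hg'def, hker _ hn]
    have h1d := hardy1d_Ioi hR hg hg'c hgR
    have CS : ∀ ρ : ℝ, (g' ρ) ^ 2 ≤ c ^ 2 * G (ρ • v) := by
      intro ρ
      rw [hc2]
      exact Finset.sum_mul_sq_le_sq_mul_sq Finset.univ (fun a => v a)
        (fun a => fderiv ℝ w (ρ • v) (Pi.single a 1))
    -- left integrand rewrite
    have e_left : ∀ ρ : ℝ, ρ ∈ Ioi (0:ℝ) →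
        ENNReal.ofReal (ρ ^ 2) * ENNReal.ofReal (F (ρ • v)) = ENNReal.ofReal ((g ρ) ^ 2 / c ^ 2) := by
      intro ρ hρ
      have hρ0 : (0:ℝ) < ρ := hρ
      have hsqrt : Real.sqrt (∑ a, (ρ • v) a ^ 2) = ρ * c := by
        have hsum : ∑ a, (ρ • v) a ^ 2 = ρ ^ 2 * ∑ a, v a ^ 2 := by
          rw [Finset.mul_sum]
          refine Finset.sum_congr rfl fun a _ => ?_
          simp [Pi.smul_apply, smul_eq_mul]; ring
        rw [hsum, Real.sqrt_mul (sq_nonneg ρ), Real.sqrt_sq hρ0.le]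
      rw [← ENNReal.ofReal_mul (sq_nonneg ρ)]
      congr 1
      rw [hF]
      simp only [hsqrt]
      have : g ρ = w (ρ • v) := rfl
      rw [← this]
      field_simp
    rw [setLIntegral_congr_fun measurableSet_Ioi (fun ρ hρ => e_left ρ hρ)]
    -- middle inequality
    have intL : IntegrableOn (fun ρ => (g ρ) ^ 2 / c ^ 2) (Ioi (0:ℝ)) := by
      apply integrableOn_Ioi_of_cpt hR (by fun_prop)
      intro ρ hρ; rw [hgR ρ hρ.le]; ring
    have intR : IntegrableOn (fun ρ => 4 * (ρ ^ 2 * (g' ρ) ^ 2) / c ^ 2) (Ioi (0:ℝ)) := by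
      apply integrableOn_Ioi_of_cpt hR (by fun_prop)
      intro ρ hρ; rw [hg'R ρ hρ]; ring
    have gc : Continuous g := continuous_iff_continuousAt.2 fun x => (hg x).continuousAt
    have mid : ∫⁻ ρ in Ioi (0:ℝ), ENNReal.ofReal ((g ρ) ^ 2 / c ^ 2)
        ≤ ∫⁻ ρ in Ioi (0:ℝ), ENNReal.ofReal (4 * (ρ ^ 2 * (g' ρ) ^ 2) / c ^ 2) := by
      rw [← ofReal_integral_eq_lintegral_ofReal intL
          (Filter.Eventually.of_forall fun ρ => by positivity),
        ← ofReal_integral_eq_lintegral_ofReal intR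
          (Filter.Eventually.of_forall fun ρ => by positivity)]
      apply ENNReal.ofReal_le_ofReal
      have hdiv1 : ∫ ρ in Ioi (0:ℝ), (g ρ) ^ 2 / c ^ 2
          = (∫ ρ in Ioi (0:ℝ), (g ρ) ^ 2) / c ^ 2 := integral_div _ _
      have hdiv2 : ∫ ρ in Ioi (0:ℝ), 4 * (ρ ^ 2 * (g' ρ) ^ 2) / c ^ 2
          = (4 * ∫ ρ in Ioi (0:ℝ), ρ ^ 2 * (g' ρ) ^ 2) / c ^ 2 := by
        have : (fun ρ : ℝ => 4 * (ρ ^ 2 * (g' ρ) ^ 2) / c ^ 2)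
            = fun ρ : ℝ => 4 * (ρ ^ 2 * (g' ρ) ^ 2 / c ^ 2) := by
          funext ρ; ring
        rw [this, integral_const_mul, integral_div]
        ring
      rw [hdiv1, hdiv2]
      gcongr
    refine le_trans mid ?_
    apply lintegral_mono_ae
    filter_upwards [ae_restrict_mem measurableSet_Ioi] with ρ hρ
    rw [← ENNReal.ofReal_mul (sq_nonneg ρ)]
    apply ENNReal.ofReal_le_ofReal
    rw [div_le_iff₀ (by positivity : (0:ℝ) < c ^ 2)]
    nlinarith [mul_le_mul_of_nonneg_left (CS ρ) (by positivity : (0:ℝ) ≤ 4 * ρ ^ 2)]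
  -- assemble
  have m1 : Measurable fun x : Pi3 => ENNReal.ofReal (F x) := Fmeas.ennreal_ofReal
  have m2 : Measurable fun x : Pi3 => ENNReal.ofReal (4 * G x) :=
    ((Gcont.measurable).const_mul 4).ennreal_ofReal
  have key : ∫⁻ x : Pi3, ENNReal.ofReal (F x) ≤ ENNReal.ofReal (∫ x : Pi3, 4 * G x) := by
    rw [polar3 _ m1, ofReal_integral_eq_lintegral_ofReal int4G
      (Filter.Eventually.of_forall fun x => by positivity), polar3 _ m2]
    exact lintegral_mono fun θ => perθ θ
  have lhs_eq : ∫ x : Pi3, F x = (∫⁻ x : Pi3, ENNReal.ofReal (F x)).toReal :=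
    integral_eq_lintegral_of_nonneg_ae (Filter.Eventually.of_forall fun x => sq_nonneg _)
      Fmeas.aestronglyMeasurable
  rw [lhs_eq]
  refine le_trans (ENNReal.toReal_mono ENNReal.ofReal_ne_top key) ?_
  rw [ENNReal.toReal_ofReal (integral_nonneg fun x => by positivity)]
  rw [integral_const_mul]


/-- Hardy-type control of `u` by the conformal energy:
`‖(s/r)u‖_{L²(H_s)} ≤ 2 E_c(s,u)^{1/2}`. -/
theorem stmt_8 (s : ℝ) (hs : 0 < s)
    (u : (Fin 4 → ℝ) → ℝ) (hu : ContDiff ℝ 2 u)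
    (hsupp : ∃ δ > (0 : ℝ), ∀ p : Fin 4 → ℝ, p 0 < rfun p + 1 + δ → u p = 0) :
    Real.sqrt (∫ x : Fin 3 → ℝ,
        ((s / Real.sqrt (∑ a, (x a) ^ 2)) * u (hyp s x)) ^ 2)
      ≤ 2 * Real.sqrt (Ec s u) := by
  obtain ⟨δ, hδ, hvan⟩ := hsupp
  set t : Pi3 → ℝ := fun x => Real.sqrt (s ^ 2 + ∑ a, x a ^ 2) with ht
  have htpos : ∀ x, 0 < t x := fun x => Real.sqrt_pos.2 (by positivity)
  have hyp0 : ∀ x : Pi3, hyp s x 0 = t x := fun x => rfl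
  have hypsucc : ∀ (x : Pi3) (a : Fin 3), hyp s x a.succ = x a := fun x a => by
    simp [hyp]
  have htcd : ContDiff ℝ 1 t := by
    apply ContDiff.sqrt
    · exact contDiff_const.add (ContDiff.sum fun a _ =>
        ((ContinuousLinearMap.proj a : Pi3 →L[ℝ] ℝ).contDiff).pow 2)
    · intro x; positivity
  have hhyp_cd : ContDiff ℝ 1 (hyp s) := by
    apply contDiff_pi.2
    intro i
    refine Fin.cases ?_ ?_ i
    · exact htcd
    · intro a
      exact (ContinuousLinearMap.proj a : Pi3 →L[ℝ] ℝ).contDiff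
  have hucd1 : ContDiff ℝ 1 u := hu.of_le one_le_two
  set W : Pi3 → ℝ := fun x => s * u (hyp s x) with hWdef
  have hWc : ContDiff ℝ 1 W := contDiff_const.mul (hucd1.comp hhyp_cd)
  set R : ℝ := max 1 (s ^ 2 / (2 * (1 + δ))) with hRdef
  have hRpos : (0:ℝ) < R := lt_of_lt_of_le one_pos (le_max_left _ _)
  set U : Set (Fin 4 → ℝ) := {p | p 0 < rfun p + 1 + δ} with hUdef
  have hrfunc : Continuous rfun := by
    apply Real.continuous_sqrt.comp
    exact (((continuous_apply (1 : Fin 4)).pow 2).add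
      ((continuous_apply (2 : Fin 4)).pow 2)).add ((continuous_apply (3 : Fin 4)).pow 2)
  have hUopen : IsOpen U := by
    apply isOpen_lt (continuous_apply (0 : Fin 4))
    exact (hrfunc.add continuous_const).add continuous_const
  have hrfun : ∀ x : Pi3, rfun (hyp s x) = Real.sqrt (∑ a, x a ^ 2) := by
    intro x
    have h1 : hyp s x 1 = x 0 := rfl
    have h2 : hyp s x 2 = x 1 := rfl
    have h3 : hyp s x 3 = x 2 := rfl
    rw [rfun, h1, h2, h3, Fin.sum_univ_three]
  have hmem : ∀ x : Pi3, R ≤ Real.sqrt (∑ a, x a ^ 2) → hyp s x ∈ U := by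
    intro x hx
    set r : ℝ := Real.sqrt (∑ a, x a ^ 2) with hrdef
    have hr0 : 0 ≤ r := Real.sqrt_nonneg _
    have hr1 : (1:ℝ) ≤ r := le_trans (le_max_left _ _) hx
    have hr2 : s ^ 2 / (2 * (1 + δ)) ≤ r := le_trans (le_max_right _ _) hx
    have hrsq : r ^ 2 = ∑ a, x a ^ 2 :=
      Real.sq_sqrt (Finset.sum_nonneg fun a _ => sq_nonneg _)
    have hkey : s ^ 2 ≤ 2 * (1 + δ) * r := by
      rw [div_le_iff₀ (by positivity)] at hr2
      linarith
    show hyp s x 0 < rfun (hyp s x) + 1 + δ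
    rw [hyp0, hrfun]
    have hlt : s ^ 2 + ∑ a, x a ^ 2 < (r + 1 + δ) ^ 2 := by
      rw [← hrsq]; nlinarith
    calc t x < Real.sqrt ((r + 1 + δ) ^ 2) := Real.sqrt_lt_sqrt (by positivity) hlt
      _ = r + 1 + δ := Real.sqrt_sq (by linarith)
  have hvanU : ∀ p ∈ U, u p = 0 := fun p hp => hvan p hp
  have hfderivU : ∀ p ∈ U, fderiv ℝ u p = 0 := by
    intro p hp
    have hev : u =ᶠ[nhds p] fun _ => 0 := by
      filter_upwards [hUopen.mem_nhds hp] with q hq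
      exact hvanU q hq
    rw [hev.fderiv_eq]
    exact fderiv_const_apply 0
  have hpdU : ∀ (i : Fin 4), ∀ p ∈ U, pd i u p = 0 := by
    intro i p hp
    rw [pd, hfderivU p hp]
    rfl
  have hWvan : ∀ x : Pi3, R ≤ Real.sqrt (∑ a, x a ^ 2) → W x = 0 := by
    intro x hx
    have := hvanU _ (hmem x hx)
    simp [hWdef, this]
  -- derivative identity
  have hder : ∀ (x : Pi3) (a : Fin 3),
      fderiv ℝ W x (Pi.single a 1) = s * pba a u (hyp s x) := by
    intro x a
    set p : Fin 4 → ℝ := hyp s x with hp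
    have hinner : HasFDerivAt (fun y : Pi3 => s ^ 2 + ∑ b, y b ^ 2)
        (∑ b : Fin 3, (2 * x b) • (ContinuousLinearMap.proj b : Pi3 →L[ℝ] ℝ)) x := by
      have h1 : HasFDerivAt (fun y : Pi3 => ∑ b, y b ^ 2)
          (∑ b : Fin 3, (2 * x b) • (ContinuousLinearMap.proj b : Pi3 →L[ℝ] ℝ)) x := by
        apply HasFDerivAt.fun_sum
        intro b _
        have h2 := (hasDerivAt_pow 2 (x b)).comp_hasFDerivAt x (hasFDerivAt_apply (𝕜 := ℝ) b x)
        simp at h2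
        exact h2
      simpa using h1.const_add (s ^ 2)
    have hsqrtD : HasFDerivAt t
        ((1 / (2 * t x)) • ∑ b : Fin 3, (2 * x b) • (ContinuousLinearMap.proj b : Pi3 →L[ℝ] ℝ)) x :=
      HasFDerivAt.sqrt hinner (by positivity)
    set M : Pi3 →L[ℝ] (Fin 4 → ℝ) := ContinuousLinearMap.pi
      (Fin.cons ((1 / (2 * t x)) • ∑ b : Fin 3, (2 * x b) • (ContinuousLinearMap.proj b : Pi3 →L[ℝ] ℝ))
        (fun b => ContinuousLinearMap.proj b)) with hM
    have hhypD : HasFDerivAt (hyp s) M x := by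
      rw [hM]
      apply hasFDerivAt_pi.2
      intro i
      refine Fin.cases ?_ ?_ i
      · simpa [hyp0] using hsqrtD
      · intro b
        simpa [hypsucc] using hasFDerivAt_apply (𝕜 := ℝ) b x
    have huD : HasFDerivAt u (fderiv ℝ u p) p :=
      ((hu.differentiable two_ne_zero) p).hasFDerivAt
    have hWD : HasFDerivAt W (s • ((fderiv ℝ u p).comp M)) x :=
      (huD.comp x hhypD).const_mul s
    rw [hWD.fderiv]
    have hMval : M (Pi.single a 1) = Fin.cons (x a / t x) (Pi.single a 1) := by
      funext i
      rw [hM, ContinuousLinearMap.pi_apply]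
      refine Fin.cases ?_ ?_ i
      · rw [Fin.cons_zero, Fin.cons_zero]
        rw [ContinuousLinearMap.smul_apply, ContinuousLinearMap.sum_apply]
        have hb : ∀ b : Fin 3, ((2 * x b) • (ContinuousLinearMap.proj b :
            Pi3 →L[ℝ] ℝ)) (Pi.single a 1) = if b = a then 2 * x a else 0 := by
          intro b
          by_cases h : b = a
          · subst h; simp [Pi.single_apply]
          · simp [Pi.single_apply, h, Ne.symm h]
        rw [Finset.sum_congr rfl fun b _ => hb b, Finset.sum_ite_eq' Finset.univ a
          (fun _ => 2 * x a)]
        simp only [Finset.mem_univ, if_true, smul_eq_mul]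
        have hne := (htpos x).ne'
        field_simp
      · intro b
        rw [Fin.cons_succ, Fin.cons_succ]
        rfl
    have hvec : (Fin.cons (x a / t x) (Pi.single a 1) : Fin 4 → ℝ)
        = (x a / t x) • (Pi.single (0 : Fin 4) (1:ℝ) : Fin 4 → ℝ) + (Pi.single (a.succ) (1:ℝ) : Fin 4 → ℝ) := by
      funext i
      refine Fin.cases ?_ ?_ i
      · simp [Pi.single_apply, (Fin.succ_ne_zero a)]
      · intro b
        simp [Pi.single_apply, Fin.succ_inj, (Fin.succ_ne_zero b)]
    have heval : (s • ((fderiv ℝ u p).comp M)) (Pi.single a 1)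
        = s * (fderiv ℝ u p (M (Pi.single a 1))) := rfl
    rw [heval, hMval, hvec, map_add, (fderiv ℝ u p).map_smul]
    rw [pba]
    have hpa : p a.succ = x a := hypsucc x a
    have hp0 : p 0 = t x := rfl
    rw [hpa, hp0, smul_eq_mul]
    rfl
  -- Ec integrand
  set E1 : Pi3 → ℝ := fun x => ∑ a : Fin 3, (s * pba a u (hyp s x)) ^ 2 with hE1
  set E2 : Pi3 → ℝ := fun x => (Kop u (hyp s x) + 2 * u (hyp s x)) ^ 2 with hE2
  have hfdu : Continuous (fderiv ℝ u) := hu.continuous_fderiv two_ne_zero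
  have hpdc : ∀ i : Fin 4, Continuous (pd i u) := fun i =>
    hfdu.clm_apply continuous_const
  have hhypc : Continuous (hyp s) := hhyp_cd.continuous
  have htc : Continuous t := htcd.continuous
  have hpbac : ∀ a : Fin 3, Continuous fun x => pba a u (hyp s x) := by
    intro a
    have he : (fun x => pba a u (hyp s x)) = fun x =>
        (x a / t x) * pd 0 u (hyp s x) + pd a.succ u (hyp s x) := by
      funext x; rw [pba, hypsucc, hyp0]
    rw [he]
    exact (((continuous_apply a).div htc fun x => (htpos x).ne').mul
      ((hpdc 0).comp hhypc)).add ((hpdc a.succ).comp hhypc)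
  have hcompi : ∀ i : Fin 4, Continuous fun x : Pi3 => hyp s x i := fun i =>
    (continuous_apply i).comp hhypc
  have hsfc : Continuous fun x => sfun (hyp s x) := by
    apply Real.continuous_sqrt.comp
    exact ((((hcompi 0).pow 2).sub ((hcompi 1).pow 2)).sub ((hcompi 2).pow 2)).sub
      ((hcompi 3).pow 2)
  have hpbsc : Continuous fun x => pbs u (hyp s x) := by
    have he : (fun x => pbs u (hyp s x)) = fun x =>
        (sfun (hyp s x) / t x) * pd 0 u (hyp s x) := by
      funext x; rw [pbs, hyp0]
    rw [he]
    exact (hsfc.div htc fun x => (htpos x).ne').mul ((hpdc 0).comp hhypc)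
  have hKc : Continuous fun x => Kop u (hyp s x) := by
    have he : (fun x => Kop u (hyp s x)) = fun x =>
        sfun (hyp s x) * pbs u (hyp s x)
          + ∑ a : Fin 3, 2 * x a * pba a u (hyp s x) := by
      funext x
      rw [Kop]
      simp only [hypsucc]
    rw [he]
    apply (hsfc.mul hpbsc).add
    apply continuous_finset_sum
    intro a _
    exact (continuous_const.mul (continuous_apply a)).mul (hpbac a)
  have hE1c : Continuous E1 :=
    continuous_finset_sum _ fun a _ => (continuous_const.mul (hpbac a)).pow 2
  have hE2c : Continuous E2 :=
    (hKc.add (continuous_const.mul (hucd1.continuous.comp hhypc))).pow 2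
  have hpbaU : ∀ (a : Fin 3), ∀ pp ∈ U, pba a u pp = 0 := by
    intro a pp hp
    rw [pba, hpdU 0 pp hp, hpdU a.succ pp hp]
    ring
  have hE1van : ∀ x : Pi3, R ≤ Real.sqrt (∑ a, x a ^ 2) → E1 x = 0 := by
    intro x hx
    simp only [hE1]
    apply Finset.sum_eq_zero
    intro a _
    rw [hpbaU a _ (hmem x hx)]
    ring
  have hKU : ∀ pp ∈ U, Kop u pp = 0 := by
    intro pp hp
    rw [Kop, pbs, hpdU 0 pp hp]
    have hz : ∀ a : Fin 3, 2 * pp a.succ * pba a u pp = 0 := fun a => by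
      rw [hpbaU a pp hp]; ring
    rw [Finset.sum_congr rfl fun a _ => hz a]
    simp
  have hE2van : ∀ x : Pi3, R ≤ Real.sqrt (∑ a, x a ^ 2) → E2 x = 0 := by
    intro x hx
    have hp := hmem x hx
    simp only [hE2]
    rw [hKU _ hp, hvanU _ hp]
    ring
  have hsupp12 : HasCompactSupport (fun x => E1 x + E2 x) := by
    apply HasCompactSupport.intro (isCompact_closedBall (0:Pi3) R)
    intro x hx
    rw [mem_closedBall, dist_zero_right, not_le] at hx
    have hxr : R ≤ Real.sqrt (∑ a, x a ^ 2) := le_trans hx.le (norm_le_sqrt x)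
    rw [hE1van x hxr, hE2van x hxr, add_zero]
  have hsupp1 : HasCompactSupport E1 := by
    apply HasCompactSupport.intro (isCompact_closedBall (0:Pi3) R)
    intro x hx
    rw [mem_closedBall, dist_zero_right, not_le] at hx
    exact hE1van x (le_trans hx.le (norm_le_sqrt x))
  have int12 : Integrable (fun x => E1 x + E2 x) :=
    (hE1c.add hE2c).integrable_of_hasCompactSupport hsupp12
  have int1 : Integrable E1 := hE1c.integrable_of_hasCompactSupport hsupp1
  have hEc : Ec s u = ∫ x : Pi3, (E1 x + E2 x) := rfl
  have hle1 : ∫ x : Pi3, E1 x ≤ Ec s u := by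
    rw [hEc]
    apply integral_mono int1 int12
    intro x
    exact le_add_of_nonneg_right (sq_nonneg _)
  have hH := hardy3 hWc hRpos hWvan
  have hLHSint : (fun x : Pi3 => ((s / Real.sqrt (∑ a, x a ^ 2)) * u (hyp s x)) ^ 2)
      = fun x : Pi3 => (W x / Real.sqrt (∑ a, x a ^ 2)) ^ 2 := by
    funext x
    rw [hWdef, div_mul_eq_mul_div]
  have hRHSint : (fun x : Pi3 => ∑ a : Fin 3, (fderiv ℝ W x (Pi.single a 1)) ^ 2) = E1 := by
    funext x
    simp only [hE1]
    exact Finset.sum_congr rfl fun a _ => by rw [hder x a]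
  have hineq : (∫ x : Pi3, ((s / Real.sqrt (∑ a, x a ^ 2)) * u (hyp s x)) ^ 2)
      ≤ 4 * Ec s u := by
    rw [show (∫ x : Pi3, ((s / Real.sqrt (∑ a, x a ^ 2)) * u (hyp s x)) ^ 2)
        = ∫ x : Pi3, (W x / Real.sqrt (∑ a, x a ^ 2)) ^ 2 from by rw [hLHSint]]
    refine le_trans hH ?_
    rw [show (∫ x : Pi3, ∑ a : Fin 3, (fderiv ℝ W x (Pi.single a 1)) ^ 2)
        = ∫ x : Pi3, E1 x from by rw [hRHSint]]
    linarith
  calc Real.sqrt (∫ x : Fin 3 → ℝ, ((s / Real.sqrt (∑ a, x a ^ 2)) * u (hyp s x)) ^ 2)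
      ≤ Real.sqrt (4 * Ec s u) := Real.sqrt_le_sqrt hineq
    _ = 2 * Real.sqrt (Ec s u) := by
        rw [show (4:ℝ) * Ec s u = 2 ^ 2 * Ec s u by ring,
          Real.sqrt_mul (by positivity : (0:ℝ) ≤ 2 ^ 2),
          Real.sqrt_sq (by norm_num : (0:ℝ) ≤ 2)]
end
end

section
/- Null quadratic forms in the semi-hyperboloidal frame: let T be a constant quadratic form on R^4 that vanishes on null covectors (T^{αβ}ξ_αξ_β = 0 whenever ξ_0² = Σ_a ξ_a²). Then in the region {t/2 < |x| < t}, the frame component T̄^{00} = T^{αβ}Ψ^0_αΨ^0_β with Ψ^0 = (t/s, −x^1/s, −x^2/s, −x^3/s) satisfies T̄^{00} = ((t−r)/(t+r))·T^{00} + (t/(t+r))·T^{0β}ξ_β + (t/(t+r))·T^{α0}ξ_α, where ξ = (r/t, x^1/t, x^2/t, x^3/t) and r = |x|; in particular |T̄^{00}| ≤ C with C depending only on T. -/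
open MeasureTheory

noncomputable section

/-- null quadratic forms in the semi-hyperboloidal frame:
decomposition of `T̄^{00}` and its uniform boundedness in `{t/2 < |x| < t}`. -/
theorem stmt_15 (T : Matrix (Fin 4) (Fin 4) ℝ)
    (hnull : ∀ ξ : Fin 4 → ℝ, (ξ 0) ^ 2 = ∑ a : Fin 3, (ξ a.succ) ^ 2 →
      ∑ α, ∑ β, T α β * ξ α * ξ β = 0) :
    ∃ C : ℝ, ∀ (t : ℝ) (x : Fin 3 → ℝ),
      t / 2 < Real.sqrt (∑ a, (x a) ^ 2) →
      Real.sqrt (∑ a, (x a) ^ 2) < t →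
      (let r := Real.sqrt (∑ a, (x a) ^ 2)
       let s := Real.sqrt (t ^ 2 - r ^ 2)
       let ψ : Fin 4 → ℝ := Fin.cons (t / s) (fun a => -(x a) / s)
       let ξ : Fin 4 → ℝ := Fin.cons (r / t) (fun a => x a / t)
       (∑ α, ∑ β, T α β * ψ α * ψ β =
          ((t - r) / (t + r)) * T 0 0
          + (t / (t + r)) * ∑ β, T 0 β * ξ β
          + (t / (t + r)) * ∑ α, T α 0 * ξ α) ∧
       |∑ α, ∑ β, T α β * ψ α * ψ β| ≤ C) := by
  refine ⟨|T 0 0|, ?_⟩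
  intro t x h1 h2
  intro r s ψ ξ
  have hx : (0:ℝ) ≤ ∑ a, (x a)^2 := by positivity
  have hr0 : 0 ≤ r := Real.sqrt_nonneg _
  have ht : 0 < t := by linarith
  have hr2 : r ^ 2 = x 0 ^ 2 + x 1 ^ 2 + x 2 ^ 2 := by
    show Real.sqrt _ ^ 2 = _
    rw [Real.sq_sqrt hx, Fin.sum_univ_three]
  have hs2 : s ^ 2 = t ^ 2 - r ^ 2 := by
    show Real.sqrt _ ^ 2 = _
    exact Real.sq_sqrt (by nlinarith)
  have hs : 0 < s := Real.sqrt_pos.mpr (by nlinarith)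
  have hψ0 : ψ 0 = t / s := rfl
  have hψ1 : ψ 1 = -(x 0) / s := rfl
  have hψ2 : ψ 2 = -(x 1) / s := rfl
  have hψ3 : ψ 3 = -(x 2) / s := rfl
  have hξ0 : ξ 0 = r / t := rfl
  have hξ1 : ξ 1 = x 0 / t := rfl
  have hξ2 : ξ 2 = x 1 / t := rfl
  have hξ3 : ξ 3 = x 2 / t := rfl
  clear_value r s ψ ξ
  have hsne : s ≠ 0 := ne_of_gt hs
  have htne : t ≠ 0 := ne_of_gt ht
  have htr : t + r ≠ 0 := by positivity
  -- null constraints from rational null vectors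
  have n1 := hnull ![1,1,0,0] (by norm_num [Fin.sum_univ_three, Matrix.cons_val_two, Matrix.tail_cons, Matrix.head_cons])
  have n2 := hnull ![1,-1,0,0] (by norm_num [Fin.sum_univ_three, Matrix.cons_val_two, Matrix.tail_cons, Matrix.head_cons])
  have n3 := hnull ![1,0,1,0] (by norm_num [Fin.sum_univ_three, Matrix.cons_val_two, Matrix.tail_cons, Matrix.head_cons])
  have n4 := hnull ![1,0,-1,0] (by norm_num [Fin.sum_univ_three, Matrix.cons_val_two, Matrix.tail_cons, Matrix.head_cons])
  have n5 := hnull ![1,0,0,1] (by norm_num [Fin.sum_univ_three, Matrix.cons_val_two, Matrix.tail_cons, Matrix.head_cons])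
  have n6 := hnull ![1,0,0,-1] (by norm_num [Fin.sum_univ_three, Matrix.cons_val_two, Matrix.tail_cons, Matrix.head_cons])
  have n7 := hnull ![5,3,4,0] (by norm_num [Fin.sum_univ_three, Matrix.cons_val_two, Matrix.tail_cons, Matrix.head_cons])
  have n8 := hnull ![5,-3,-4,0] (by norm_num [Fin.sum_univ_three, Matrix.cons_val_two, Matrix.tail_cons, Matrix.head_cons])
  have n9 := hnull ![5,3,0,4] (by norm_num [Fin.sum_univ_three, Matrix.cons_val_two, Matrix.tail_cons, Matrix.head_cons])
  have n10 := hnull ![5,-3,0,-4] (by norm_num [Fin.sum_univ_three, Matrix.cons_val_two, Matrix.tail_cons, Matrix.head_cons])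
  have n11 := hnull ![5,0,3,4] (by norm_num [Fin.sum_univ_three, Matrix.cons_val_two, Matrix.tail_cons, Matrix.head_cons])
  have n12 := hnull ![5,0,-3,-4] (by norm_num [Fin.sum_univ_three, Matrix.cons_val_two, Matrix.tail_cons, Matrix.head_cons])
  simp only [Fin.sum_univ_four, Matrix.cons_val_zero, Matrix.cons_val_one, Matrix.head_cons,
    Matrix.cons_val_two, Matrix.tail_cons, Matrix.cons_val_three] at n1 n2 n3 n4 n5 n6 n7 n8 n9 n10 n11 n12
  ring_nf at n1 n2 n3 n4 n5 n6 n7 n8 n9 n10 n11 n12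
  have e01 : T 0 1 + T 1 0 = 0 := by linarith
  have e02 : T 0 2 + T 2 0 = 0 := by linarith
  have e03 : T 0 3 + T 3 0 = 0 := by linarith
  have e11 : T 1 1 = -T 0 0 := by linarith
  have e22 : T 2 2 = -T 0 0 := by linarith
  have e33 : T 3 3 = -T 0 0 := by linarith
  have e12 : T 1 2 + T 2 1 = 0 := by linarith
  have e13 : T 1 3 + T 3 1 = 0 := by linarith
  have e23 : T 2 3 + T 3 2 = 0 := by linarith
  clear n1 n2 n3 n4 n5 n6 n7 n8 n9 n10 n11 n12 hnull h1 h2 hx hr0 hs ht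
  have comb : ∀ A p q : ℝ, A * (p / s) * (q / s) = A * p * q / s ^ 2 := fun A p q => by ring
  have comb2 : ∀ A p : ℝ, A * (p / t) = A * p / t := fun A p => by ring
  have key : ∑ α, ∑ β, T α β * ψ α * ψ β = T 0 0 := by
    simp only [Fin.sum_univ_four, hψ0, hψ1, hψ2, hψ3, comb, ← add_div]
    rw [div_eq_iff (pow_ne_zero 2 hsne)]
    linear_combination (-(t * x 0)) * e01 + (-(t * x 1)) * e02 + (-(t * x 2)) * e03 +
      (x 0 ^ 2) * e11 + (x 1 ^ 2) * e22 + (x 2 ^ 2) * e33 +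
      (x 0 * x 1) * e12 + (x 0 * x 2) * e13 + (x 1 * x 2) * e23 -
      T 0 0 * hs2 + T 0 0 * hr2
  refine ⟨?_, ?_⟩
  · rw [key]
    have hd : ∀ N : ℝ, t * N / (t + r) / t = N / (t + r) := fun N => by
      rw [div_div, mul_comm (t + r) t, mul_div_mul_left _ _ htne]
    simp only [Fin.sum_univ_four, hξ0, hξ1, hξ2, hξ3, comb2, ← add_div,
      div_mul_eq_mul_div, hd]
    rw [eq_div_iff htr]
    linear_combination (-(x 0)) * e01 + (-(x 1)) * e02 + (-(x 2)) * e03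
  · rw [key]
end
end
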